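/- Let G be an infinite graph which has pairwise-disjoint ruling sets F_n (n ∈ ℕ) satisfying |F_n| ≤ log₂(n) for all sufficiently large n. Then in the Rado coloring of K_ℕ, every monochromatic copy of G has vertex set of upper density 0. -/

import Mathlib

open Filter

open scoped Classical in
noncomputable def upperDensity (S : Set ℕ) : ℝ :=
  Filter.limsup (fun t : ℕ => (((Finset.range t).filter (fun n => n ∈ S)).card : ℝ) / t)
    Filter.atTop

/-- The Rado coloring of the edge `{s,t}`: for `s < t` it is the `s`-th bit of the
binary expansion of `t` (as a `Bool`). -/
def radoColor (s t : ℕ) : Bool :=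
  if s < t then t.testBit s else s.testBit t

/-- `X` is a ruling set in `G`: `X` is finite and all but finitely many vertices
outside `X` have a neighbor in `X`. -/
def IsRulingSet {V : Type*} (G : SimpleGraph V) (X : Set V) : Prop :=
  X.Finite ∧ {v : V | v ∉ X ∧ ∀ x ∈ X, ¬ G.Adj v x}.Finite

/-- Read bit `s` of a function `Fin B → Bool`, `false` out of range. -/
def bitget {B : ℕ} (g : Fin B → Bool) (s : ℕ) : Bool :=
  if h : s < B then g ⟨s, h⟩ else false

lemma funcount (B : ℕ) (i : Bool) (S : ℕ → Finset ℕ) (J : Finset ℕ)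
    (hsub : ∀ j ∈ J, ∀ s ∈ S j, s < B)
    (hdisj : ∀ j ∈ J, ∀ k ∈ J, j ≠ k → Disjoint (S j) (S k)) :
    ((Finset.univ.filter (fun g : Fin B → Bool =>
        ∀ j ∈ J, ∃ s ∈ S j, bitget g s = i)).card : ℝ)
      ≤ 2 ^ B * ∏ j ∈ J, (1 - ((2:ℝ) ^ (S j).card)⁻¹) := by
  classical
  induction J using Finset.induction_on with
  | empty =>
      rw [Finset.filter_true_of_mem (by simp)]
      simp [Finset.card_univ]
  | @insert a J' ha ih =>
      have hbool : ∀ b : Bool, ¬ b = !i ↔ b = i := by intro b; cases b <;> cases i <;> decide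
      set A : Finset (Fin B → Bool) :=
        Finset.univ.filter (fun g => ∀ j ∈ J', ∃ s ∈ S j, bitget g s = i) with hA
      set Bad : Finset (Fin B → Bool) :=
        A.filter (fun g => ∀ s ∈ S a, bitget g s = !i) with hBad
      set u : (Fin B → Bool) → (Fin B → Bool) :=
        fun g b => if (b : ℕ) ∈ S a then !i else g b with hu
      -- the filtered set for `insert a J'` equals `A \ Bad`
      have hT : (Finset.univ.filter (fun g : Fin B → Bool =>
          ∀ j ∈ insert a J', ∃ s ∈ S j, bitget g s = i)) = A \ Bad := by
        ext g
        simp only [hA, hBad, Finset.mem_filter, Finset.mem_sdiff, Finset.mem_univ, true_and,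
          Finset.forall_mem_insert, not_and, not_forall]
        constructor
        · rintro ⟨⟨s, hs, hi⟩, hJ'⟩
          refine ⟨hJ', fun _ => ⟨s, hs, ?_⟩⟩
          rw [hi]; cases i <;> decide
        · rintro ⟨hJ', hnb⟩
          obtain ⟨s, hs, hne⟩ := hnb hJ'
          exact ⟨⟨s, hs, (hbool _).mp hne⟩, hJ'⟩
      have hBadA : Bad ⊆ A := Finset.filter_subset _ _
      -- each fiber of `u` on `A` has at most `2 ^ (S a).card` elements
      have hfiber : ∀ h ∈ Bad, (A.filter (fun g => u g = h)).card ≤ 2 ^ (S a).card := by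
        intro h _
        have := Finset.card_le_card_of_injOn
          (f := fun g (s : {x // x ∈ S a}) => bitget g (s : ℕ))
          (s := A.filter (fun g => u g = h)) (t := Finset.univ)
          (fun g _ => Finset.mem_univ _) ?_
        · calc (A.filter (fun g => u g = h)).card
              ≤ (Finset.univ : Finset ({x // x ∈ S a} → Bool)).card := this
            _ = 2 ^ (S a).card := by
                simp [Finset.card_univ, Fintype.card_fun, Fintype.card_coe]
        · intro g₁ hg₁ g₂ hg₂ heq
          simp only [Finset.mem_coe, Finset.mem_filter] at hg₁ hg₂
          funext b
          by_cases hb : (b : ℕ) ∈ S a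
          · have h1 := congrFun heq ⟨(b : ℕ), hb⟩
            simpa [bitget, b.isLt] using h1
          · have h1 := congrFun (hg₁.2.trans hg₂.2.symm) b
            simpa [hu, hb] using h1
      -- `u` maps `A` into `Bad`
      have hmaps : ∀ g ∈ A, u g ∈ Bad := by
        intro g hg
        simp only [hA, Finset.mem_filter, Finset.mem_univ, true_and] at hg
        have hgA : u g ∈ A := by
          simp only [hA, Finset.mem_filter, Finset.mem_univ, true_and]
          intro j hj
          obtain ⟨s, hs, hi⟩ := hg j hj
          have hsB : s < B := hsub j (Finset.mem_insert_of_mem hj) s hs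
          have hsa : s ∉ S a := by
            have hd : Disjoint (S a) (S j) :=
              hdisj a (Finset.mem_insert_self a J') j (Finset.mem_insert_of_mem hj)
                (by rintro rfl; exact ha hj)
            exact Finset.disjoint_right.mp hd hs
          refine ⟨s, hs, ?_⟩
          have : bitget (u g) s = bitget g s := by
            simp [bitget, hsB, hu, hsa]
          rw [this]; exact hi
        simp only [hBad, Finset.mem_filter]
        refine ⟨hgA, fun s hs => ?_⟩
        have hsB : s < B := hsub a (Finset.mem_insert_self a J') s hs
        simp [bitget, hsB, hu, hs]
      have hcard : A.card ≤ 2 ^ (S a).card * Bad.card :=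
        Finset.card_le_mul_card_image_of_maps_to hmaps _ hfiber
      -- numeric conclusion
      have hAB : (Bad.card : ℝ) ≤ A.card := by exact_mod_cast Finset.card_le_card hBadA
      have hcardR : (A.card : ℝ) ≤ 2 ^ (S a).card * Bad.card := by exact_mod_cast hcard
      have hpow : (0:ℝ) < 2 ^ (S a).card := by positivity
      have hTcard : ((Finset.univ.filter (fun g : Fin B → Bool =>
          ∀ j ∈ insert a J', ∃ s ∈ S j, bitget g s = i)).card : ℝ)
          = (A.card : ℝ) - Bad.card := by
        rw [hT, Finset.card_sdiff, Finset.inter_eq_left.mpr hBadA]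
        have := Finset.card_le_card hBadA
        push_cast [Nat.cast_sub this]
        ring
      have ihA := ih (fun j hj => hsub j (Finset.mem_insert_of_mem hj))
        (fun j hj k hk hne => hdisj j (Finset.mem_insert_of_mem hj) k (Finset.mem_insert_of_mem hk) hne)
      rw [hTcard, Finset.prod_insert ha]
      have h1 : (A.card : ℝ) - Bad.card ≤ (1 - ((2:ℝ) ^ (S a).card)⁻¹) * A.card := by
        have : (A.card : ℝ) / 2 ^ (S a).card ≤ Bad.card := by
          rw [div_le_iff₀ hpow]
          linarith [hcardR]
        have h2 : (A.card : ℝ) * ((2:ℝ) ^ (S a).card)⁻¹ ≤ Bad.card := by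
          rw [← div_eq_mul_inv]; exact this
        ring_nf
        ring_nf at h2
        linarith
      have h3 : (0:ℝ) ≤ 1 - ((2:ℝ) ^ (S a).card)⁻¹ := by
        have : ((2:ℝ) ^ (S a).card)⁻¹ ≤ 1 := by
          rw [inv_le_one_iff₀]
          right; exact one_le_pow₀ (by norm_num)
        linarith
      calc (A.card : ℝ) - Bad.card ≤ (1 - ((2:ℝ) ^ (S a).card)⁻¹) * A.card := h1
        _ ≤ (1 - ((2:ℝ) ^ (S a).card)⁻¹) * (2 ^ B * ∏ j ∈ J', (1 - ((2:ℝ) ^ (S j).card)⁻¹)) :=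
            mul_le_mul_of_nonneg_left ihA h3
        _ = 2 ^ B * ((1 - ((2:ℝ) ^ (S a).card)⁻¹) * ∏ j ∈ J', (1 - ((2:ℝ) ^ (S j).card)⁻¹)) := by ring

lemma natcount_le (B : ℕ) (i : Bool) (S : ℕ → Finset ℕ) (J : Finset ℕ)
    (hsub : ∀ j ∈ J, ∀ s ∈ S j, s < B) :
    (((Finset.range (2 ^ B)).filter
        (fun m => ∀ j ∈ J, ∃ s ∈ S j, m.testBit s = i)).card)
      ≤ (Finset.univ.filter (fun g : Fin B → Bool =>
        ∀ j ∈ J, ∃ s ∈ S j, bitget g s = i)).card := by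
  classical
  apply Finset.card_le_card_of_injOn (fun m => fun b : Fin B => m.testBit (b : ℕ))
  · intro m hm
    simp only [Finset.mem_coe, Finset.mem_filter, Finset.mem_range] at hm
    simp only [Finset.mem_coe, Finset.mem_filter, Finset.mem_univ, true_and]
    intro j hj
    obtain ⟨s, hs, hbit⟩ := hm.2 j hj
    refine ⟨s, hs, ?_⟩
    have hsB : s < B := hsub j hj s hs
    simpa [bitget, hsB] using hbit
  · intro m₁ h₁ m₂ h₂ heq
    simp only [Finset.mem_coe, Finset.mem_filter, Finset.mem_range] at h₁ h₂
    apply Nat.eq_of_testBit_eq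
    intro b
    by_cases hb : b < B
    · exact congrFun heq ⟨b, hb⟩
    · push_neg at hb
      have hle : 2 ^ B ≤ 2 ^ b := Nat.pow_le_pow_right (by norm_num) hb
      rw [Nat.testBit_eq_false_of_lt (lt_of_lt_of_le h₁.1 hle),
        Nat.testBit_eq_false_of_lt (lt_of_lt_of_le h₂.1 hle)]

lemma telescope (a : ℕ) (ha : 1 ≤ a) :
    ∀ K, a ≤ K → ∏ n ∈ Finset.Icc a K, (1 - (n : ℝ)⁻¹) = ((a : ℝ) - 1) / K := by
  intro K hK
  induction K, hK using Nat.le_induction with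
  | base =>
      rw [Finset.Icc_self, Finset.prod_singleton]
      have h0 : (a : ℝ) ≠ 0 := by positivity
      field_simp
  | succ K hK ihK =>
      rw [Finset.prod_Icc_succ_top (by omega), ihK]
      have h0 : (K : ℝ) ≠ 0 := by
        have : 1 ≤ K := le_trans ha hK
        positivity
      have h1 : ((K : ℝ) + 1) ≠ 0 := by positivity
      push_cast
      field_simp
      ring

open scoped Classical in
lemma upperDensity_eq_zero (S : Set ℕ)
    (h : ∀ ε : ℝ, 0 < ε → ∀ᶠ t : ℕ in Filter.atTop,
      (((Finset.range t).filter (fun n => n ∈ S)).card : ℝ) / t ≤ ε) :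
    upperDensity S = 0 := by
  have h0 : ∀ t : ℕ, 0 ≤ (((Finset.range t).filter (fun n => n ∈ S)).card : ℝ) / t :=
    fun t => by positivity
  have h1 : ∀ t : ℕ, (((Finset.range t).filter (fun n => n ∈ S)).card : ℝ) / t ≤ 1 := by
    intro t
    rcases Nat.eq_zero_or_pos t with ht | ht
    · simp [ht]
    · apply div_le_one_of_le₀ _ (by positivity)
      have : ((Finset.range t).filter (fun n => n ∈ S)).card ≤ t := by
        simpa using Finset.card_filter_le (Finset.range t) (fun n => n ∈ S)
      exact_mod_cast this
  have hco : Filter.IsCoboundedUnder (· ≤ ·) Filter.atTop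
      (fun t : ℕ => (((Finset.range t).filter (fun n => n ∈ S)).card : ℝ) / t) :=
    Filter.isCoboundedUnder_le_of_le Filter.atTop h0
  have hkey : ∀ ε : ℝ, 0 < ε → upperDensity S ≤ ε := fun ε hε =>
    Filter.limsup_le_of_le hco (h ε hε)
  apply le_antisymm
  · by_contra hc
    push_neg at hc
    have := hkey (upperDensity S / 2) (by linarith)
    linarith
  · exact Filter.le_limsup_of_frequently_le (Filter.Frequently.of_forall h0)
      ⟨1, Filter.eventually_map.mpr (Filter.Eventually.of_forall h1)⟩

theorem stmt_5 {V : Type*} [Countable V] [Infinite V] (G : SimpleGraph V)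
    (F : ℕ → Set V) (hrul : ∀ n, IsRulingSet G (F n))
    (hdisj : Pairwise (Function.onFun Disjoint F))
    (hsize : ∃ N : ℕ, ∀ n ≥ N, ((F n).ncard : ℝ) ≤ Real.logb 2 n)
    (i : Bool) (f : V → ℕ) (hinj : Function.Injective f)
    (hmono : ∀ u v : V, G.Adj u v → radoColor (f u) (f v) = i) :
    upperDensity (Set.range f) = 0 := by
  classical
  obtain ⟨N, hN⟩ := hsize
  apply upperDensity_eq_zero
  intro ε hε
  -- choose the window [a, K]
  set a := max N 2 with ha_def
  have ha2 : 2 ≤ a := le_max_right _ _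
  have haN : N ≤ a := le_max_left _ _
  obtain ⟨K0, hK0⟩ := exists_nat_ge (4 * (a : ℝ) / ε)
  set K := max a K0 with hK_def
  have haK : a ≤ K := le_max_left _ _
  have hKpos : (0:ℝ) < K := by
    have : 2 ≤ K := le_trans ha2 haK
    exact_mod_cast Nat.lt_of_lt_of_le (by norm_num) this
  have hKR : 4 * (a : ℝ) / ε ≤ K :=
    le_trans hK0 (by exact_mod_cast Nat.cast_le.mpr (le_max_right a K0))
  -- the sets of bits
  set J := Finset.Icc a K with hJ_def
  set S : ℕ → Finset ℕ := fun n => ((hrul n).1.toFinset).image f with hS_def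
  have hScard : ∀ n, (S n).card = (F n).ncard := by
    intro n
    rw [hS_def]
    simp only
    rw [Finset.card_image_of_injective _ hinj, Set.ncard_eq_toFinset_card (F n) (hrul n).1]
  have hSdisj : ∀ m ∈ J, ∀ k ∈ J, m ≠ k → Disjoint (S m) (S k) := by
    intro m _ k _ hmk
    rw [Finset.disjoint_left]
    intro x hxm hxk
    simp only [hS_def, Finset.mem_image, Set.Finite.mem_toFinset] at hxm hxk
    obtain ⟨v1, hv1, rfl⟩ := hxm
    obtain ⟨v2, hv2, he⟩ := hxk
    cases hinj he
    exact Set.disjoint_left.mp (hdisj hmk) hv1 hv2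
  set M := (J.biUnion S).sup id with hM_def
  have hSM : ∀ n ∈ J, ∀ s ∈ S n, s ≤ M := by
    intro n hn s hs
    exact Finset.le_sup (f := id) (Finset.mem_biUnion.mpr ⟨n, hn, hs⟩)
  -- the exceptional set
  set E : Set V := ⋃ n ∈ J, ({v : V | v ∉ F n ∧ ∀ x ∈ F n, ¬ G.Adj v x} ∪ F n) with hE_def
  have hEfin : E.Finite :=
    Set.Finite.biUnion (J.finite_toSet) (fun n _ => ((hrul n).2.union (hrul n).1))
  set C0 : Finset ℕ := (hEfin.image f).toFinset with hC0_def
  -- the key structural fact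
  have hgood : ∀ v : V, f v ∉ C0 → M < f v → ∀ n ∈ J, ∃ s ∈ S n, (f v).testBit s = i := by
    intro v hvC hvM n hn
    have hvE : v ∉ E := by
      intro hv
      exact hvC (by rw [hC0_def, Set.Finite.mem_toFinset]; exact ⟨v, hv, rfl⟩)
    have hv1 : v ∉ F n := by
      intro h
      exact hvE (Set.mem_biUnion hn (Or.inr h))
    have hv2 : ¬ (v ∉ F n ∧ ∀ x ∈ F n, ¬ G.Adj v x) := by
      intro h
      exact hvE (Set.mem_biUnion hn (Or.inl h))
    have hex : ∃ x ∈ F n, G.Adj v x := by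
      by_contra hall
      push_neg at hall
      exact hv2 ⟨hv1, hall⟩
    obtain ⟨x, hx, hadj⟩ := hex
    have hfx : f x ∈ S n := by
      rw [hS_def]
      simp only [Finset.mem_image, Set.Finite.mem_toFinset]
      exact ⟨x, hx, rfl⟩
    have hfxM : f x ≤ M := hSM n hn _ hfx
    have hcol := hmono v x hadj
    rw [radoColor, if_neg (by omega)] at hcol
    exact ⟨f x, hfx, hcol⟩
  -- the product bound
  set P := ∏ n ∈ J, (1 - ((2:ℝ) ^ (S n).card)⁻¹) with hP_def
  have hfac0 : ∀ n : ℕ, (0:ℝ) ≤ 1 - ((2:ℝ) ^ (S n).card)⁻¹ := by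
    intro n
    have : ((2:ℝ) ^ (S n).card)⁻¹ ≤ 1 := by
      rw [inv_le_one_iff₀]
      right; exact one_le_pow₀ (by norm_num)
    linarith
  have hP0 : 0 ≤ P := Finset.prod_nonneg (fun n _ => hfac0 n)
  have hPle : P ≤ ((a:ℝ) - 1) / K := by
    rw [hP_def]
    calc ∏ n ∈ J, (1 - ((2:ℝ) ^ (S n).card)⁻¹)
        ≤ ∏ n ∈ J, (1 - (n:ℝ)⁻¹) := by
          apply Finset.prod_le_prod (fun n _ => hfac0 n)
          intro n hn
          rw [hJ_def, Finset.mem_Icc] at hn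
          have hn2 : 2 ≤ n := le_trans ha2 hn.1
          have hn0 : (0:ℝ) < n := by exact_mod_cast Nat.lt_of_lt_of_le (by norm_num) hn2
          have hcle : ((S n).card : ℝ) ≤ Real.logb 2 n := by
            rw [hScard]; exact hN n (le_trans haN hn.1)
          have hpow : (2:ℝ) ^ (S n).card ≤ n := by
            have h2 : (2:ℝ) ^ (((S n).card : ℕ) : ℝ) ≤ (2:ℝ) ^ Real.logb 2 (n:ℝ) :=
              Real.rpow_le_rpow_of_exponent_le (by norm_num) hcle
            rw [Real.rpow_logb (by norm_num) (by norm_num) hn0] at h2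
            rw [← Real.rpow_natCast]
            exact h2
          have hinv : (n:ℝ)⁻¹ ≤ ((2:ℝ) ^ (S n).card)⁻¹ := by
            apply inv_anti₀ (by positivity) hpow
          linarith
      _ = ((a:ℝ) - 1) / K := telescope a (by omega) K haK
  have h2P : 2 * P ≤ ε / 2 := by
    have h4a : 4 * (a:ℝ) ≤ K * ε := by
      rw [div_le_iff₀ hε] at hKR; linarith
    have ha1 : (1:ℝ) ≤ a := by exact_mod_cast le_trans (by norm_num) ha2
    have : ((a:ℝ) - 1) / K ≤ ε / 4 := by
      rw [div_le_div_iff₀ hKpos (by norm_num)]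
      nlinarith
    linarith
  -- eventual bound
  have hev1 : ∀ᶠ t : ℕ in Filter.atTop,
      (((Finset.range t).filter (fun n => n ∈ Set.range f)).card : ℝ) / t
        ≤ ((C0.card : ℝ) + (M + 1)) / t + 2 * P := by
    filter_upwards [Filter.eventually_ge_atTop (max (2 ^ (M + 1)) 2)] with t ht
    have ht2 : 2 ≤ t := le_trans (le_max_right _ _) ht
    have htM : 2 ^ (M + 1) ≤ t := le_trans (le_max_left _ _) ht
    set B := Nat.clog 2 t with hB_def
    have htB : t ≤ 2 ^ B := Nat.le_pow_clog (by norm_num) t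
    have hMB : M + 1 ≤ B := by
      have h := Nat.clog_mono_right 2 htM
      rwa [Nat.clog_pow 2 (M + 1) (by norm_num)] at h
    have h2B : 2 ^ B < 2 * t := by
      have hx : 2 ^ (B - 1) < t := by
        simpa [hB_def, Nat.pred_eq_sub_one] using
          Nat.pow_pred_clog_lt_self (b := 2) (by norm_num) (x := t) (by omega)
      have hBB : 2 ^ B = 2 * 2 ^ (B - 1) := by
        rw [← pow_succ']
        congr 1
        omega
      omega
    have hsubs : (Finset.range t).filter (fun n => n ∈ Set.range f) ⊆
        (C0 ∪ Finset.range (M + 1)) ∪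
          (Finset.range (2 ^ B)).filter (fun m => ∀ n ∈ J, ∃ s ∈ S n, m.testBit s = i) := by
      intro m hm
      simp only [Finset.mem_filter, Finset.mem_range] at hm
      have hmt := hm.1
      obtain ⟨v, rfl⟩ := hm.2
      by_cases h1 : f v ∈ C0
      · exact Finset.mem_union_left _ (Finset.mem_union_left _ h1)
      by_cases h2 : f v ≤ M
      · exact Finset.mem_union_left _
          (Finset.mem_union_right _ (Finset.mem_range.mpr (by omega)))
      · refine Finset.mem_union_right _ (Finset.mem_filter.mpr
          ⟨Finset.mem_range.mpr (lt_of_lt_of_le hmt htB), ?_⟩)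
        exact hgood v h1 (by omega)
    have hsubB : ∀ j ∈ J, ∀ s ∈ S j, s < B := fun j hj s hs => by
      have := hSM j hj s hs; omega
    have hgc : (((Finset.range (2 ^ B)).filter
        (fun m => ∀ n ∈ J, ∃ s ∈ S n, m.testBit s = i)).card : ℝ) ≤ 2 ^ B * P := by
      calc (((Finset.range (2 ^ B)).filter
            (fun m => ∀ n ∈ J, ∃ s ∈ S n, m.testBit s = i)).card : ℝ)
          ≤ ((Finset.univ.filter (fun g : Fin B → Bool =>
              ∀ j ∈ J, ∃ s ∈ S j, bitget g s = i)).card : ℝ) := by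
            exact_mod_cast natcount_le B i S J hsubB
        _ ≤ 2 ^ B * P := by rw [hP_def]; exact funcount B i S J hsubB hSdisj
    have hcard : (((Finset.range t).filter (fun n => n ∈ Set.range f)).card : ℝ)
        ≤ (C0.card : ℝ) + (M + 1) + 2 ^ B * P := by
      have h1 := Finset.card_le_card hsubs
      have h2 := Finset.card_union_le (C0 ∪ Finset.range (M + 1))
        ((Finset.range (2 ^ B)).filter (fun m => ∀ n ∈ J, ∃ s ∈ S n, m.testBit s = i))
      have h3 := Finset.card_union_le C0 (Finset.range (M + 1))
      have h4 : ((Finset.range t).filter (fun n => n ∈ Set.range f)).card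
          ≤ C0.card + (M + 1) + ((Finset.range (2 ^ B)).filter
            (fun m => ∀ n ∈ J, ∃ s ∈ S n, m.testBit s = i)).card := by
        have := Finset.card_range (M + 1)
        omega
      calc (((Finset.range t).filter (fun n => n ∈ Set.range f)).card : ℝ)
          ≤ ((C0.card + (M + 1) : ℕ) : ℝ) + (((Finset.range (2 ^ B)).filter
            (fun m => ∀ n ∈ J, ∃ s ∈ S n, m.testBit s = i)).card : ℝ) := by
            exact_mod_cast h4
        _ ≤ (C0.card : ℝ) + (M + 1) + 2 ^ B * P := by
            push_cast
            linarith [hgc]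
    have htpos : (0:ℝ) < t := by
      exact_mod_cast Nat.lt_of_lt_of_le (by norm_num) ht2
    have h2Bt : ((2:ℝ) ^ B) ≤ 2 * t := by
      exact_mod_cast Nat.le_of_lt h2B
    calc (((Finset.range t).filter (fun n => n ∈ Set.range f)).card : ℝ) / t
        ≤ ((C0.card : ℝ) + (M + 1) + 2 ^ B * P) / t := by
          gcongr
      _ ≤ ((C0.card : ℝ) + (M + 1)) / t + 2 * P := by
          rw [add_div]
          have : (2:ℝ) ^ B * P / t ≤ 2 * P := by
            rw [div_le_iff₀ htpos]
            calc (2:ℝ) ^ B * P ≤ 2 * t * P := by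
                  apply mul_le_mul_of_nonneg_right h2Bt hP0
              _ = 2 * P * t := by ring
          linarith
  have hev2 : ∀ᶠ t : ℕ in Filter.atTop, ((C0.card : ℝ) + (M + 1)) / t ≤ ε / 2 :=
    (tendsto_const_div_atTop_nhds_zero_nat ((C0.card : ℝ) + (M + 1))).eventually_le_const
      (by linarith)
  filter_upwards [hev1, hev2] with t h1 h2
  linarith
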